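/- Let G be a finite simple undirected graph in which every vertex has degree at least 1, let α ∈ (0,1), and let π_v denote the personalized PageRank vector of source v. Suppose p, r : V → ℝ satisfy the invariant π_s[t] = p[t] + Σ_{v ∈ V} r[v] π_v[t] for all t ∈ V. Fix a vertex u and define the push step: p'[u] = p[u] + α r[u], p'[w] = p[w] for w ≠ u; r'[u] = 0, r'[w] = r[w] + (1-α) r[u]/d_u for every w adjacent to u, and r'[w] = r[w] for all other w. Then the invariant also holds for (p', r'): π_s[t] = p'[t] + Σ_{v ∈ V} r'[v] π_v[t] for all t ∈ V. -/

import Mathlib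

open Finset

variable {V : Type*} [Fintype V] [DecidableEq V]

/-- The random-walk transition matrix of `G`: `W[u,v] = 1/dᵤ` if `u ~ v`, else `0`. -/
noncomputable def transMat (G : SimpleGraph V) [DecidableRel G.Adj] : Matrix V V ℝ :=
  fun u v => if G.Adj u v then ((G.degree u : ℝ))⁻¹ else 0

/-- Personalized PageRank: `π_s[t] = α ∑_{k≥0} (1-α)^k (W^k)[s,t]`. -/
noncomputable def ppr (G : SimpleGraph V) [DecidableRel G.Adj] (α : ℝ) (s t : V) : ℝ :=
  α * ∑' k : ℕ, (1 - α) ^ k * ((transMat G) ^ k) s t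

/-- The probability that a simple random walk traverses exactly the walk `p`:
the product of `1/dᵤ` over all vertices `u` of `p` except the last. -/
noncomputable def walkProb (G : SimpleGraph V) [DecidableRel G.Adj] {s t : V}
    (p : G.Walk s t) : ℝ :=
  (p.support.dropLast.map (fun u => ((G.degree u : ℝ))⁻¹)).prod

lemma transMat_nonneg (G : SimpleGraph V) [DecidableRel G.Adj] (u v : V) :
    0 ≤ transMat G u v := by
  unfold transMat; split <;> positivity

lemma transMat_row_sum (G : SimpleGraph V) [DecidableRel G.Adj]
    (hdeg : ∀ v, 0 < G.degree v) (u : V) : ∑ v, transMat G u v = 1 := by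
  unfold transMat
  have h1 : ∑ v, (if G.Adj u v then ((G.degree u : ℝ))⁻¹ else 0)
      = ∑ v ∈ Finset.univ.filter (G.Adj u), ((G.degree u : ℝ))⁻¹ :=
    (Finset.sum_filter _ _).symm
  have h2 : Finset.filter (G.Adj u) Finset.univ = G.neighborFinset u := by
    ext v; simp [SimpleGraph.mem_neighborFinset]
  rw [h1, h2, Finset.sum_const, SimpleGraph.card_neighborFinset_eq_degree, nsmul_eq_mul]
  exact mul_inv_cancel₀ (Nat.cast_ne_zero.mpr (hdeg u).ne')

lemma transMat_pow_bounds (G : SimpleGraph V) [DecidableRel G.Adj]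
    (hdeg : ∀ v, 0 < G.degree v) :
    ∀ (k : ℕ) (u v : V), 0 ≤ ((transMat G) ^ k) u v ∧ ((transMat G) ^ k) u v ≤ 1 := by
  intro k
  induction k with
  | zero => intro u v; simp [Matrix.one_apply]; split <;> norm_num
  | succ k ih =>
    intro u v
    rw [pow_succ', Matrix.mul_apply]
    constructor
    · exact Finset.sum_nonneg fun w _ => mul_nonneg (transMat_nonneg G u w) (ih w v).1
    · calc ∑ w, transMat G u w * ((transMat G) ^ k) w v
          ≤ ∑ w, transMat G u w * 1 :=
            Finset.sum_le_sum fun w _ =>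
              mul_le_mul_of_nonneg_left (ih w v).2 (transMat_nonneg G u w)
        _ = 1 := by simp [transMat_row_sum G hdeg u]

lemma ppr_summable (G : SimpleGraph V) [DecidableRel G.Adj]
    (hdeg : ∀ v, 0 < G.degree v) {α : ℝ} (hα : α ∈ Set.Ioo (0 : ℝ) 1) (u t : V) :
    Summable (fun k : ℕ => (1 - α) ^ k * ((transMat G) ^ k) u t) := by
  obtain ⟨h0, h1⟩ := hα
  apply Summable.of_nonneg_of_le
    (fun k => mul_nonneg (pow_nonneg (by linarith) k) (transMat_pow_bounds G hdeg k u t).1)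
    (fun k => ?_) (summable_geometric_of_lt_one (r := 1 - α) (by linarith) (by linarith))
  calc (1 - α) ^ k * ((transMat G) ^ k) u t ≤ (1 - α) ^ k * 1 :=
        mul_le_mul_of_nonneg_left (transMat_pow_bounds G hdeg k u t).2
          (pow_nonneg (by linarith) k)
    _ = (1 - α) ^ k := mul_one _

lemma ppr_rec (G : SimpleGraph V) [DecidableRel G.Adj]
    (hdeg : ∀ v, 0 < G.degree v) {α : ℝ} (hα : α ∈ Set.Ioo (0 : ℝ) 1) (u t : V) :
    ppr G α u t = α * (if u = t then 1 else 0)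
      + (1 - α) * ∑ w, transMat G u w * ppr G α w t := by
  unfold ppr
  rw [Summable.tsum_eq_zero_add (ppr_summable G hdeg hα u t)]
  have hf0 : (1 - α) ^ 0 * ((transMat G) ^ 0) u t = (if u = t then 1 else 0) := by
    simp [Matrix.one_apply]
  have hsucc : ∀ k : ℕ, (1 - α) ^ (k + 1) * ((transMat G) ^ (k + 1)) u t
      = ∑ w, (1 - α) * (transMat G u w * ((1 - α) ^ k * ((transMat G) ^ k) w t)) := by
    intro k
    rw [pow_succ' (transMat G), Matrix.mul_apply, Finset.mul_sum]
    exact Finset.sum_congr rfl fun w _ => by ring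
  simp_rw [hsucc]
  rw [Summable.tsum_finsetSum (fun w _ => (Summable.mul_left _
    ((ppr_summable G hdeg hα w t).mul_left (transMat G u w))))]
  have : ∀ w, ∑' k : ℕ, (1 - α) * (transMat G u w * ((1 - α) ^ k * ((transMat G) ^ k) w t))
      = (1 - α) * (transMat G u w * ∑' k : ℕ, (1 - α) ^ k * ((transMat G) ^ k) w t) := by
    intro w
    rw [tsum_mul_left, tsum_mul_left]
  simp_rw [this, hf0]
  rw [mul_add]
  congr 1
  rw [Finset.mul_sum, Finset.mul_sum]
  exact Finset.sum_congr rfl fun w _ => by ring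

theorem push_preserves_invariant (G : SimpleGraph V) [DecidableRel G.Adj]
    (hdeg : ∀ v, 0 < G.degree v) (α : ℝ) (hα : α ∈ Set.Ioo (0 : ℝ) 1)
    (s : V) (p r : V → ℝ)
    (hinv : ∀ t, ppr G α s t = p t + ∑ v, r v * ppr G α v t)
    (u : V) (p' r' : V → ℝ)
    (hp' : ∀ w, p' w = if w = u then p u + α * r u else p w)
    (hr' : ∀ w, r' w = if w = u then 0
        else if G.Adj u w then r w + (1 - α) * r u / (G.degree u : ℝ) else r w) :
    ∀ t, ppr G α s t = p' t + ∑ v, r' v * ppr G α v t := by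
  intro t
  have hdu : (G.degree u : ℝ) ≠ 0 := Nat.cast_ne_zero.mpr (hdeg u).ne'
  have hterm : ∀ v, r' v * ppr G α v t
      = (if v = u then 0 else r v * ppr G α v t)
        + (1 - α) * r u * (transMat G u v * ppr G α v t) := by
    intro v
    rw [hr']
    by_cases hv : v = u
    · subst hv
      simp [transMat, G.irrefl]
    · by_cases ha : G.Adj u v
      · simp only [if_neg hv, if_pos ha, transMat, if_pos ha]
        field_simp
      · simp [hv, ha, transMat]
  have hsum : ∑ v, r' v * ppr G α v t
      = (∑ v, r v * ppr G α v t) - r u * ppr G α u t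
        + (1 - α) * r u * ∑ v, transMat G u v * ppr G α v t := by
    simp_rw [hterm]
    rw [Finset.sum_add_distrib, ← Finset.mul_sum]
    congr 1
    have : ∀ v : V, (if v = u then 0 else r v * ppr G α v t)
        = r v * ppr G α v t - (if v = u then r v * ppr G α v t else 0) := by
      intro v; split <;> ring
    simp_rw [this, Finset.sum_sub_distrib, Finset.sum_ite_eq' Finset.univ u]
    simp
  have hrec := ppr_rec G hdeg hα u t
  have hkey : (1 - α) * ∑ v, transMat G u v * ppr G α v t
      = ppr G α u t - α * (if u = t then 1 else 0) := by linarith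
  rw [hp', hsum]
  have : (1 - α) * r u * ∑ v, transMat G u v * ppr G α v t
      = r u * (ppr G α u t - α * (if u = t then 1 else 0)) := by
    rw [← hkey]; ring
  rw [this, hinv t]
  by_cases ht : t = u
  · subst ht; simp; ring
  · simp only [if_neg ht, if_neg (Ne.symm ht), mul_zero, sub_zero]
    ring
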